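/- A generalized N-mean of order m has a unique kernel: if u and v are a.e. finite functions on Λ^m with G_{m,N}(u) = G_{m,N}(v) a.e. on Λ^N, then u = v a.e. on Λ^m. -/

import Mathlib

open MeasureTheory Filter

/-- The generalized `N`-mean of order `m` with kernel `u`:
`G_{m,N}(u)(x₁,...,x_N) = binom(N,m)⁻¹ ∑_{1 ≤ i₁ < ⋯ < i_m ≤ N} u(x_{i₁},...,x_{i_m})`. -/
noncomputable def gmean {Λ : Type*} (m N : ℕ) (u : (Fin m → Λ) → ℝ)
    (x : Fin N → Λ) : ℝ :=
  (N.choose m : ℝ)⁻¹ *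
    ∑ s ∈ (Finset.powersetCard m (Finset.univ : Finset (Fin N))).attach,
      u fun i => x (s.1.orderEmbOfFin (Finset.mem_powersetCard.mp s.2).2 i)

namespace GmeanAux

open Finset

variable {Λ : Type*}

/-- Unnormalized symmetric sum. -/
noncomputable def S (k n : ℕ) (g : (Fin k → Λ) → ℝ) (x : Fin n → Λ) : ℝ :=
  ∑ t ∈ Finset.powersetCard k (Finset.univ : Finset (Fin n)),
    if h : t.card = k then g (fun i => x (t.orderEmbOfFin h i)) else 0

lemma S_apply (k n : ℕ) (g : (Fin k → Λ) → ℝ) (x : Fin n → Λ) :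
    S k n g x = ∑ t ∈ Finset.powersetCard k (Finset.univ : Finset (Fin n)),
      if h : t.card = k then g (fun i => x (t.orderEmbOfFin h i)) else 0 := rfl

lemma gmean_eq_S (m N : ℕ) (u : (Fin m → Λ) → ℝ) (x : Fin N → Λ) :
    gmean m N u x = (N.choose m : ℝ)⁻¹ * S m N u x := by
  unfold gmean S
  congr 1
  rw [← Finset.sum_attach (Finset.powersetCard m (Finset.univ : Finset (Fin N)))
      (fun t => if h : t.card = m then u (fun i => x (t.orderEmbOfFin h i)) else 0)]
  refine Finset.sum_congr rfl fun s _ => ?_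
  rw [dif_pos (Finset.mem_powersetCard.mp s.2).2]

lemma S_add (k n : ℕ) (f g : (Fin k → Λ) → ℝ) (x : Fin n → Λ) :
    S k n (fun z => f z + g z) x = S k n f x + S k n g x := by
  unfold S
  rw [← Finset.sum_add_distrib]
  refine Finset.sum_congr rfl fun t _ => ?_
  by_cases h : t.card = k <;> simp [h]

lemma S_smul (k n : ℕ) (c : ℝ) (g : (Fin k → Λ) → ℝ) (x : Fin n → Λ) :
    S k n (fun z => c * g z) x = c * S k n g x := by
  unfold S
  rw [Finset.mul_sum]
  refine Finset.sum_congr rfl fun t _ => ?_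
  by_cases h : t.card = k <;> simp [h]

lemma S_zero (k n : ℕ) (x : Fin n → Λ) :
    S k n (fun _ => (0 : ℝ)) x = 0 := by
  unfold S
  refine Finset.sum_eq_zero fun t _ => ?_
  by_cases h : t.card = k <;> simp [h]

lemma S_sub (k n : ℕ) (f g : (Fin k → Λ) → ℝ) (x : Fin n → Λ) :
    S k n (fun z => f z - g z) x = S k n f x - S k n g x := by
  unfold S
  rw [← Finset.sum_sub_distrib]
  refine Finset.sum_congr rfl fun t _ => ?_
  by_cases h : t.card = k <;> simp [h]

lemma S_self (m : ℕ) (w : (Fin m → Λ) → ℝ) (x : Fin m → Λ) :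
    S m m w x = w x := by
  unfold S
  have hcard : (Finset.univ : Finset (Fin m)).card = m := by simp
  have h1 : Finset.powersetCard m (Finset.univ : Finset (Fin m)) = {Finset.univ} := by
    ext t
    simp only [Finset.mem_powersetCard, Finset.mem_singleton]
    constructor
    · rintro ⟨-, hc⟩
      exact Finset.eq_univ_of_card t (by simp [hc])
    · rintro rfl
      simp
  rw [h1, Finset.sum_singleton, dif_pos hcard]
  congr 1
  funext i
  have := (Finset.orderEmbOfFin_unique hcard (f := id)
    (fun x => Finset.mem_univ x) strictMono_id)
  exact congrArg x (congrFun this i).symm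


lemma orderEmbOfFin_map_castSucc {n k : ℕ} (t : Finset (Fin n)) (ht : t.card = k)
    (h' : (t.map Fin.castSuccOrderEmb.toEmbedding).card = k) (i : Fin k) :
    (t.map Fin.castSuccOrderEmb.toEmbedding).orderEmbOfFin h' i =
      Fin.castSucc (t.orderEmbOfFin ht i) := by
  have := Finset.orderEmbOfFin_unique h'
    (f := fun i => Fin.castSucc (t.orderEmbOfFin ht i))
    (fun i => Finset.mem_map_of_mem _ (Finset.orderEmbOfFin_mem t ht i))
    (Fin.strictMono_castSucc.comp (t.orderEmbOfFin ht).strictMono)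
  exact (congrFun this i).symm

lemma orderEmbOfFin_insert_last {n k : ℕ} (t : Finset (Fin n)) (ht : t.card = k)
    (h' : (insert (Fin.last n) (t.map Fin.castSuccOrderEmb.toEmbedding)).card = k + 1) :
    (fun i => (insert (Fin.last n) (t.map Fin.castSuccOrderEmb.toEmbedding)).orderEmbOfFin h' i)
      = Fin.snoc (fun i => Fin.castSucc (t.orderEmbOfFin ht i)) (Fin.last n) := by
  refine (Finset.orderEmbOfFin_unique h' ?_ ?_).symm
  · intro i
    refine Fin.lastCases ?_ ?_ i
    · rw [Fin.snoc_last]; exact Finset.mem_insert_self _ _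
    · intro j
      rw [Fin.snoc_castSucc]
      exact Finset.mem_insert_of_mem (Finset.mem_map_of_mem _ (Finset.orderEmbOfFin_mem t ht j))
  · intro p q hpq
    by_cases hq : q = Fin.last k
    · subst hq
      obtain ⟨cp, rfl⟩ := Fin.exists_castSucc_eq.mpr (ne_of_lt hpq)
      rw [Fin.snoc_castSucc, Fin.snoc_last]
      exact Fin.castSucc_lt_last _
    · obtain ⟨cq, rfl⟩ := Fin.exists_castSucc_eq.mpr hq
      obtain ⟨cp, rfl⟩ :=
        Fin.exists_castSucc_eq.mpr (ne_of_lt (hpq.trans (Fin.castSucc_lt_last cq)))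
      rw [Fin.snoc_castSucc, Fin.snoc_castSucc]
      exact Fin.castSucc_lt_castSucc_iff.mpr
        ((t.orderEmbOfFin ht).strictMono (Fin.castSucc_lt_castSucc_iff.mp hpq))

lemma map_filter_castSucc {n : ℕ} (s : Finset (Fin (n+1))) :
    (Finset.filter (fun b : Fin n => Fin.castSucc b ∈ s) Finset.univ).map
        Fin.castSuccOrderEmb.toEmbedding = s.erase (Fin.last n) := by
  ext b
  simp only [Finset.mem_map, Finset.mem_filter, Finset.mem_univ, true_and, Finset.mem_erase]
  constructor
  · rintro ⟨c, hc, rfl⟩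
    exact ⟨ne_of_lt (Fin.castSucc_lt_last c), hc⟩
  · rintro ⟨hbl, hb⟩
    obtain ⟨c, rfl⟩ := Fin.exists_castSucc_eq.mpr hbl
    exact ⟨c, hb, rfl⟩

lemma last_not_mem_map {n : ℕ} (t : Finset (Fin n)) :
    Fin.last n ∉ t.map Fin.castSuccOrderEmb.toEmbedding := by
  intro h
  obtain ⟨c, -, hc⟩ := Finset.mem_map.mp h
  exact (Fin.castSucc_lt_last c).ne hc

lemma S_snoc (k n : ℕ) (g : (Fin (k+1) → Λ) → ℝ) (x : Fin n → Λ) (a : Λ) :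
    S (k+1) (n+1) g (Fin.snoc x a) =
      S (k+1) n g x + S k n (fun z => g (Fin.snoc z a)) x := by
  classical
  unfold S
  rw [← Finset.sum_filter_add_sum_filter_not
      (Finset.powersetCard (k+1) (Finset.univ : Finset (Fin (n+1))))
      (fun t => Fin.last n ∉ t)]
  congr 1
  · refine (Finset.sum_nbij' (i := fun t : Finset (Fin n) => t.map Fin.castSuccOrderEmb.toEmbedding)
      (j := fun s : Finset (Fin (n+1)) =>
        Finset.filter (fun b : Fin n => Fin.castSucc b ∈ s) Finset.univ)
      ?_ ?_ ?_ ?_ ?_).symm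
    · intro t ht
      simp only [Finset.mem_filter, Finset.mem_powersetCard] at ht ⊢
      exact ⟨⟨Finset.subset_univ _, by rw [Finset.card_map]; exact ht.2⟩, last_not_mem_map t⟩
    · intro s hs
      simp only [Finset.mem_filter, Finset.mem_powersetCard] at hs ⊢
      have hmap := map_filter_castSucc s
      rw [Finset.erase_eq_of_notMem hs.2] at hmap
      refine ⟨Finset.subset_univ _, ?_⟩
      have := congrArg Finset.card hmap
      rw [Finset.card_map] at this
      rw [this]; exact hs.1.2
    · intro t _
      ext c
      simp only [Finset.mem_filter, Finset.mem_univ, true_and]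
      exact Finset.mem_map'  _
    · intro s hs
      simp only [Finset.mem_filter] at hs
      rw [map_filter_castSucc, Finset.erase_eq_of_notMem hs.2]
    · intro t ht
      have ht' : t.card = k + 1 := (Finset.mem_powersetCard.mp ht).2
      rw [dif_pos ht', dif_pos (by rw [Finset.card_map]; exact ht')]
      congr 1
      funext i
      rw [orderEmbOfFin_map_castSucc t ht', Fin.snoc_castSucc]
  · refine (Finset.sum_nbij' (i := fun t : Finset (Fin n) =>
        insert (Fin.last n) (t.map Fin.castSuccOrderEmb.toEmbedding))
      (j := fun s : Finset (Fin (n+1)) =>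
        Finset.filter (fun b : Fin n => Fin.castSucc b ∈ s) Finset.univ)
      ?_ ?_ ?_ ?_ ?_).symm
    · intro t ht
      simp only [Finset.mem_filter, Finset.mem_powersetCard, not_not]
      refine ⟨⟨Finset.subset_univ _, ?_⟩, Finset.mem_insert_self _ _⟩
      rw [Finset.card_insert_of_notMem (last_not_mem_map t), Finset.card_map,
        (Finset.mem_powersetCard.mp ht).2]
    · intro s hs
      simp only [Finset.mem_filter, Finset.mem_powersetCard, not_not] at hs
      refine Finset.mem_powersetCard.mpr ⟨Finset.subset_univ _, ?_⟩
      have := congrArg Finset.card (map_filter_castSucc s)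
      rw [Finset.card_map, Finset.card_erase_of_mem hs.2, hs.1.2] at this
      rw [this]
      omega
    · intro t _
      ext c
      simp only [Finset.mem_filter, Finset.mem_univ, true_and, Finset.mem_insert]
      constructor
      · rintro (h | h)
        · exact absurd h (ne_of_lt (Fin.castSucc_lt_last c))
        · exact (Finset.mem_map' _).mp h
      · intro h
        exact Or.inr ((Finset.mem_map' _).mpr h)
    · intro s hs
      simp only [Finset.mem_filter, not_not] at hs
      rw [map_filter_castSucc, Finset.insert_erase hs.2]
    · intro t ht
      have ht' : t.card = k := (Finset.mem_powersetCard.mp ht).2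
      have hlast := last_not_mem_map t
      have hcard : (insert (Fin.last n) (t.map Fin.castSuccOrderEmb.toEmbedding)).card = k + 1 := by
        rw [Finset.card_insert_of_notMem hlast, Finset.card_map, ht']
      have hemb := orderEmbOfFin_insert_last t ht' hcard
      dsimp only
      rw [dif_pos ht', dif_pos hcard]
      congr 1
      funext i
      rw [congrFun hemb i]
      refine Fin.lastCases ?_ ?_ i
      · rw [Fin.snoc_last, Fin.snoc_last, Fin.snoc_last]
      · intro j
        rw [Fin.snoc_castSucc, Fin.snoc_castSucc, Fin.snoc_castSucc]


lemma univ_map_orderEmbOfFin {n p : ℕ} (s : Finset (Fin n)) (hs : s.card = p) :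
    Finset.univ.map ⟨s.orderEmbOfFin hs, (s.orderEmbOfFin hs).injective⟩ = s := by
  ext b
  simp only [Finset.mem_map, Finset.mem_univ, true_and, Function.Embedding.coeFn_mk]
  constructor
  · rintro ⟨i, rfl⟩
    exact Finset.orderEmbOfFin_mem s hs i
  · intro hb
    have : b ∈ Set.range (s.orderEmbOfFin hs) := by
      rw [Finset.range_orderEmbOfFin]
      exact hb
    obtain ⟨i, hi⟩ := this
    exact ⟨i, hi⟩

lemma orderEmbOfFin_map {n p k : ℕ} (s : Finset (Fin n)) (hs : s.card = p)
    (t' : Finset (Fin p)) (ht' : t'.card = k)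
    (h' : (t'.map ⟨s.orderEmbOfFin hs, (s.orderEmbOfFin hs).injective⟩).card = k) (i : Fin k) :
    (t'.map ⟨s.orderEmbOfFin hs, (s.orderEmbOfFin hs).injective⟩).orderEmbOfFin h' i =
      s.orderEmbOfFin hs (t'.orderEmbOfFin ht' i) := by
  have := Finset.orderEmbOfFin_unique h'
    (f := fun i => s.orderEmbOfFin hs (t'.orderEmbOfFin ht' i))
    (fun i => Finset.mem_map_of_mem _ (Finset.orderEmbOfFin_mem t' ht' i))
    ((s.orderEmbOfFin hs).strictMono.comp (t'.orderEmbOfFin ht').strictMono)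
  exact (congrFun this i).symm

lemma filter_subset_powersetCard {n k : ℕ} (s : Finset (Fin n)) :
    Finset.filter (fun t => t ⊆ s) (Finset.powersetCard k (Finset.univ : Finset (Fin n)))
      = Finset.powersetCard k s := by
  ext t
  simp only [Finset.mem_filter, Finset.mem_powersetCard]
  exact ⟨fun ⟨⟨_, hc⟩, hsub⟩ => ⟨hsub, hc⟩, fun ⟨hsub, hc⟩ => ⟨⟨Finset.subset_univ _, hc⟩, hsub⟩⟩

lemma card_supersets {n k : ℕ} (t : Finset (Fin n)) (ht : t.card = k) :
    (Finset.filter (fun s => t ⊆ s)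
      (Finset.powersetCard (k+1) (Finset.univ : Finset (Fin n)))).card = n - k := by
  classical
  have h1 : (tᶜ : Finset (Fin n)).card = n - k := by
    rw [Finset.card_compl, ht, Fintype.card_fin]
  rw [← h1]
  refine (Finset.card_bij (fun u _ => insert u t) ?_ ?_ ?_).symm
  · intro u hu
    have hu' : u ∉ t := Finset.mem_compl.mp hu
    refine Finset.mem_filter.mpr ⟨Finset.mem_powersetCard.mpr
      ⟨Finset.subset_univ _, ?_⟩, Finset.subset_insert _ _⟩
    rw [Finset.card_insert_of_notMem hu', ht]
  · intro a1 ha1 a2 ha2 h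
    have h2 : insert a1 t = insert a2 t := h
    have : a1 ∈ insert a2 t := h2 ▸ Finset.mem_insert_self a1 t
    rcases Finset.mem_insert.mp this with h' | h'
    · exact h'
    · exact absurd h' (Finset.mem_compl.mp ha1)
  · intro s hs
    obtain ⟨hsP, hsub⟩ := Finset.mem_filter.mp hs
    obtain ⟨-, hcard⟩ := Finset.mem_powersetCard.mp hsP
    have hsd : (s \ t).card = 1 := by
      rw [Finset.card_sdiff_of_subset hsub, hcard, ht]
      omega
    obtain ⟨u, hu⟩ := Finset.card_eq_one.mp hsd
    have hu' : u ∈ s \ t := hu ▸ Finset.mem_singleton_self u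
    obtain ⟨hus, hunt⟩ := Finset.mem_sdiff.mp hu'
    refine ⟨u, Finset.mem_compl.mpr hunt, ?_⟩
    refine Finset.eq_of_subset_of_card_le (Finset.insert_subset_iff.mpr ⟨hus, hsub⟩) ?_
    rw [Finset.card_insert_of_notMem hunt, hcard, ht]

lemma S_comp (k n : ℕ) (g : (Fin k → Λ) → ℝ) (x : Fin n → Λ) :
    S (k+1) n (fun y => S k (k+1) g y) x = ((n - k : ℕ) : ℝ) * S k n g x := by
  classical
  have hstep : ∀ s ∈ Finset.powersetCard (k+1) (Finset.univ : Finset (Fin n)),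
      (if h : s.card = k + 1 then
        S k (k+1) g (fun j => x (s.orderEmbOfFin h j)) else 0)
      = ∑ t ∈ Finset.powersetCard k (Finset.univ : Finset (Fin n)),
          (if t ⊆ s then
            (if h : t.card = k then g (fun i => x (t.orderEmbOfFin h i)) else 0) else 0) := by
    intro s hsP
    have hs : s.card = k + 1 := (Finset.mem_powersetCard.mp hsP).2
    have hset : Finset.powersetCard k s
        = (Finset.powersetCard k (Finset.univ : Finset (Fin (k+1)))).map
          (Finset.mapEmbedding
            (⟨s.orderEmbOfFin hs, (s.orderEmbOfFin hs).injective⟩ : Fin (k+1) ↪ Fin n)).toEmbedding := by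
      conv_lhs => rw [← univ_map_orderEmbOfFin s hs]
      exact Finset.powersetCard_map _ _ _
    rw [dif_pos hs, ← Finset.sum_filter, filter_subset_powersetCard, hset,
      Finset.sum_map, S_apply]
    refine Finset.sum_congr rfl fun t' ht'P => ?_
    have ht' : t'.card = k := (Finset.mem_powersetCard.mp ht'P).2
    have hme : ∀ u : Finset (Fin (k+1)),
        (Finset.mapEmbedding
          (⟨s.orderEmbOfFin hs, (s.orderEmbOfFin hs).injective⟩ : Fin (k+1) ↪ Fin n)).toEmbedding u
        = u.map ⟨s.orderEmbOfFin hs, (s.orderEmbOfFin hs).injective⟩ := fun _ => rfl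
    simp only [hme]
    have hc : (t'.map ⟨s.orderEmbOfFin hs, (s.orderEmbOfFin hs).injective⟩).card = k := by
      rw [Finset.card_map, ht']
    rw [dif_pos ht', dif_pos hc]
    congr 1
    funext i
    exact (congrArg x (orderEmbOfFin_map s hs t' ht' hc i)).symm
  have h0 : S (k+1) n (fun y => S k (k+1) g y) x
      = ∑ s ∈ Finset.powersetCard (k+1) (Finset.univ : Finset (Fin n)),
        (if h : s.card = k + 1 then
          S k (k+1) g (fun j => x (s.orderEmbOfFin h j)) else 0) := rfl
  rw [h0, Finset.sum_congr rfl hstep, Finset.sum_comm, S_apply k n, Finset.mul_sum]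
  refine Finset.sum_congr rfl fun t htP => ?_
  have ht : t.card = k := (Finset.mem_powersetCard.mp htP).2
  rw [← Finset.sum_filter, Finset.sum_const, card_supersets t ht, nsmul_eq_mul]


section Meas
variable [MeasurableSpace Λ] (μ : Measure Λ) [SigmaFinite μ]

lemma qmp_comp {k n : ℕ} (e : Fin k → Fin n) (he : Function.Injective e) :
    Measure.QuasiMeasurePreserving (fun x : Fin n → Λ => x ∘ e)
      (Measure.pi fun _ : Fin n => μ) (Measure.pi fun _ : Fin k => μ) := by
  classical
  let p : Fin n → Prop := fun i => i ∈ Set.range e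
  letI : DecidablePred p := Classical.decPred p
  letI : Fintype (Subtype p) := Subtype.fintype p
  let E : Fin k ≃ {i // p i} := Equiv.ofInjective e he
  have mp1 := measurePreserving_piEquivPiSubtypeProd (fun _ : Fin n => μ) p
  have mp2 := measurePreserving_piCongrLeft (fun _ : {i // p i} => μ) E
  have hfun : (fun x : Fin n → Λ => x ∘ e)
      = ((MeasurableEquiv.piCongrLeft (fun _ : {i // p i} => Λ) E).symm
        ∘ Prod.fst ∘ (MeasurableEquiv.piEquivPiSubtypeProd (fun _ : Fin n => Λ) p)) := by
    funext x
    ext j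
    rfl
  rw [hfun]
  exact ((MeasurePreserving.symm _ mp2).quasiMeasurePreserving.comp
    (Measure.quasiMeasurePreserving_fst.comp mp1.quasiMeasurePreserving))

lemma comp_ae {k n : ℕ} {f g : (Fin k → Λ) → ℝ} (e : Fin k → Fin n)
    (he : Function.Injective e)
    (hfg : ∀ᵐ y ∂(Measure.pi fun _ : Fin k => μ), f y = g y) :
    ∀ᵐ x ∂(Measure.pi fun _ : Fin n => μ), f (x ∘ e) = g (x ∘ e) :=
  (qmp_comp μ e he).tendsto_ae.eventually hfg

lemma pi_ne_zero (hμ : μ ≠ 0) (n : ℕ) : (Measure.pi fun _ : Fin n => μ) ≠ 0 := by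
  intro h0
  have h1 : (Measure.pi fun _ : Fin n => μ) Set.univ = 0 := by rw [h0]; rfl
  rw [Measure.pi_univ] at h1
  have h2 : μ Set.univ = 0 := by
    by_contra h2
    exact (Finset.prod_ne_zero_iff.mpr fun _ _ => h2) h1
  exact hμ (Measure.measure_univ_eq_zero.mp h2)

lemma ae_snoc {N : ℕ} {P : (Fin (N+1) → Λ) → Prop}
    (h : ∀ᵐ x ∂(Measure.pi fun _ : Fin (N+1) => μ), P x) :
    ∀ᵐ a ∂μ, ∀ᵐ x ∂(Measure.pi fun _ : Fin N => μ), P (Fin.snoc x a) := by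
  have mp := measurePreserving_piFinSuccAbove (fun _ : Fin (N+1) => μ) (Fin.last N)
  have h2 := (MeasurePreserving.symm _ mp).quasiMeasurePreserving.tendsto_ae.eventually h
  have h3 := Measure.ae_ae_of_ae_prod h2
  filter_upwards [h3] with a ha
  filter_upwards [ha] with y hy
  have heq : (MeasurableEquiv.piFinSuccAbove (fun _ : Fin (N+1) => Λ) (Fin.last N)).symm (a, y)
      = Fin.snoc y a := by
    rw [MeasurableEquiv.piFinSuccAbove_symm_apply]
    exact Fin.insertNth_last' a y
  rwa [heq] at hy

lemma S_ae_congr {k n : ℕ} {f g : (Fin k → Λ) → ℝ}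
    (hfg : ∀ᵐ y ∂(Measure.pi fun _ : Fin k => μ), f y = g y) :
    ∀ᵐ x ∂(Measure.pi fun _ : Fin n => μ), S k n f x = S k n g x := by
  have H : ∀ᵐ x ∂(Measure.pi fun _ : Fin n => μ),
      ∀ t ∈ Finset.powersetCard k (Finset.univ : Finset (Fin n)),
        (if h : t.card = k then f (fun i => x (t.orderEmbOfFin h i)) else 0)
          = (if h : t.card = k then g (fun i => x (t.orderEmbOfFin h i)) else 0) := by
    rw [Filter.eventually_all_finset]
    intro t htP
    have ht : t.card = k := (Finset.mem_powersetCard.mp htP).2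
    filter_upwards [comp_ae μ (fun i => t.orderEmbOfFin ht i)
      (t.orderEmbOfFin ht).injective hfg] with x hx
    rw [dif_pos ht, dif_pos ht]
    exact hx
  filter_upwards [H] with x hx
  exact Finset.sum_congr rfl hx

end Meas

theorem S_kernel [MeasurableSpace Λ] (μ : Measure Λ) [SigmaFinite μ] (hμ : μ ≠ 0) :
    ∀ m N, m ≤ N → ∀ w : (Fin m → Λ) → ℝ,
      (∀ᵐ x ∂(Measure.pi fun _ : Fin N => μ), S m N w x = 0) →
      ∀ᵐ y ∂(Measure.pi fun _ : Fin m => μ), w y = 0 := by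
  intro m
  induction m with
  | zero =>
    intro N _ w h
    haveI : (ae (Measure.pi fun _ : Fin N => μ)).NeBot :=
      ae_neBot.mpr (pi_ne_zero μ hμ N)
    obtain ⟨x, hx⟩ := h.exists
    have hS : S 0 N w x = w (fun i => i.elim0) := by
      rw [S_apply, Finset.powersetCard_zero, Finset.sum_singleton, dif_pos Finset.card_empty]
      congr 1
      funext i
      exact i.elim0
    refine Filter.Eventually.of_forall fun y => ?_
    have hy : y = (fun i : Fin 0 => i.elim0) := funext fun i => i.elim0
    rw [hy, ← hS]
    exact hx
  | succ m' ihm' =>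
    intro N hmN
    induction N, hmN using Nat.le_induction with
    | base =>
      intro w h
      filter_upwards [h] with y hy
      rw [S_self] at hy
      exact hy
    | succ N hN ihN =>
      intro w h
      haveI : (ae μ).NeBot := ae_neBot.mpr hμ
      obtain ⟨a0, ha0⟩ := (ae_snoc μ h).exists
      set g : (Fin m' → Λ) → ℝ := fun z => w (Fin.snoc z a0) with hgdef
      have hcne : (((N - m' : ℕ)) : ℝ) ≠ 0 := Nat.cast_ne_zero.mpr (by omega)
      set c : ℝ := (((N - m' : ℕ)) : ℝ)⁻¹ with hc
      have hcne' : c ≠ 0 := by rw [hc]; exact inv_ne_zero hcne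
      have hE : ∀ᵐ x ∂(Measure.pi fun _ : Fin N => μ),
          S (m'+1) N (fun y => w y + c * S m' (m'+1) g y) x = 0 := by
        filter_upwards [ha0] with x hx
        rw [S_snoc] at hx
        rw [S_add, S_smul, S_comp]
        have hcc : c * ((((N - m' : ℕ)) : ℝ) * S m' N g x) = S m' N g x := by
          rw [hc, ← mul_assoc, inv_mul_cancel₀ hcne, one_mul]
        rw [hcc]
        exact hx
      have hK := ihN (fun y => w y + c * S m' (m'+1) g y) hE
      have hW : ∀ᵐ y ∂(Measure.pi fun _ : Fin (m'+1) => μ),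
          w y = (-c) * S m' (m'+1) g y := by
        filter_upwards [hK] with y hy
        linarith
      have h5 := S_ae_congr (n := N+1) μ hW
      have h6 : ∀ᵐ x ∂(Measure.pi fun _ : Fin (N+1) => μ), S m' (N+1) g x = 0 := by
        filter_upwards [h, h5] with x hx h5x
        rw [hx, S_smul, S_comp] at h5x
        rcases mul_eq_zero.mp h5x.symm with hz | hz
        · exact absurd (neg_eq_zero.mp hz) hcne'
        · rcases mul_eq_zero.mp hz with hz' | hz'
          · exact absurd hz' (Nat.cast_ne_zero.mpr (by omega))
          · exact hz'
      have h7 := ihm' (N+1) (by omega) g h6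
      have h8 : ∀ᵐ y ∂(Measure.pi fun _ : Fin (m'+1) => μ),
          S m' (m'+1) g y = 0 := by
        filter_upwards [S_ae_congr (n := m'+1) μ h7] with y hy
        rw [hy, S_zero]
      filter_upwards [hK, h8] with y h1 h2
      rw [h2] at h1
      linarith

end GmeanAux

/-- Corollary 4: a generalized `N`-mean of order `m` has a unique kernel:
if `G_{m,N}(u) = G_{m,N}(v)` a.e. on `Λ^N` then `u = v` a.e. on `Λ^m`. -/
theorem gmean_kernel_unique {Λ : Type*} [MeasurableSpace Λ] (μ : Measure Λ)
    [SigmaFinite μ] [μ.IsComplete] (hμ : μ ≠ 0) (m N : ℕ) (hm : 1 ≤ m) (hmN : m ≤ N)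
    (u v : (Fin m → Λ) → ℝ)
    (h : gmean m N u =ᵐ[Measure.pi fun _ : Fin N => μ] gmean m N v) :
    u =ᵐ[Measure.pi fun _ : Fin m => μ] v := by
  have hchoose : ((N.choose m : ℕ) : ℝ) ≠ 0 := Nat.cast_ne_zero.mpr (Nat.choose_pos hmN).ne'
  have hS : ∀ᵐ x ∂(Measure.pi fun _ : Fin N => μ),
      GmeanAux.S m N (fun y => u y - v y) x = 0 := by
    filter_upwards [h] with x hx
    rw [GmeanAux.gmean_eq_S, GmeanAux.gmean_eq_S] at hx
    have h2 : GmeanAux.S m N u x = GmeanAux.S m N v x :=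
      mul_left_cancel₀ (inv_ne_zero hchoose) hx
    rw [GmeanAux.S_sub, h2, sub_self]
  filter_upwards [GmeanAux.S_kernel μ hμ m N hmN (fun y => u y - v y) hS] with y hy
  have : u y - v y = 0 := hy
  linarith
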